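/- arXiv:1505.01359 — 5 statements merged into one kernel-verified Lean document; each statement's English description precedes it below -/
import Mathlib

section
/- The partial order S_{n+1}^s of finite sequences over {0,...,n} with the strong gap-embeddability relation is order-isomorphic to the product S_n^s × (S_n^s)^*, where (S_n^s)^* carries the Higman ordering induced by the strong gap-embeddability relation on S_n^s. -/
/-- The strong gap-embeddability relation on finite sequences of naturals. -/
def gapS (s t : List ℕ) : Prop :=
  ∃ f : Fin s.length → Fin t.length, StrictMono f ∧
    (∀ i : Fin s.length, s.get i = t.get (f i)) ∧
    (∀ i : Fin s.length, ∀ hi : (i : ℕ) + 1 < s.length, ∀ j : Fin t.length,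
      f i < j → j < f ⟨(i : ℕ) + 1, hi⟩ → s.get ⟨(i : ℕ) + 1, hi⟩ ≤ t.get j) ∧
    (∀ hs : 0 < s.length, ∀ j : Fin t.length, j < f ⟨0, hs⟩ → s.get ⟨0, hs⟩ ≤ t.get j)

/-- The Higman ordering on finite sequences over a partial order `r`. -/
def Higman {X : Type*} (r : X → X → Prop) (u v : List X) : Prop :=
  ∃ f : Fin u.length → Fin v.length, StrictMono f ∧
    ∀ i : Fin u.length, r (u.get i) (v.get (f i))

lemma gapS_nil (t : List ℕ) : gapS [] t := by
  refine ⟨Fin.elim0, fun i => i.elim0, fun i => i.elim0, fun i => i.elim0, ?_⟩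
  intro hs; simp at hs

lemma not_gapS_cons_nil (a : ℕ) (s : List ℕ) : ¬ gapS (a :: s) [] := by
  rintro ⟨f, -⟩
  exact (f ⟨0, by simp⟩).elim0

lemma gapS_cons_iff (a : ℕ) (s t : List ℕ) :
    gapS (a :: s) t ↔ ∃ t1 t2, t = t1 ++ a :: t2 ∧ (∀ x ∈ t1, a ≤ x) ∧ gapS s t2 := by
  constructor
  · rintro ⟨f, hm, he, hg, hp⟩
    have h0 : 0 < (a :: s).length := by simp
    set p : Fin t.length := f ⟨0, h0⟩ with hpdef
    have ha : t[(p : ℕ)] = a := by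
      have := he ⟨0, h0⟩
      simpa [List.get_eq_getElem, hpdef] using this.symm
    refine ⟨t.take p, t.drop (p + 1), ?_, ?_, ?_⟩
    · conv_lhs => rw [← List.take_append_drop (p : ℕ) t, List.drop_eq_getElem_cons p.isLt]
      rw [ha]
    · intro x hx
      rw [List.mem_iff_getElem] at hx
      obtain ⟨j, hj, rfl⟩ := hx
      have hj' : j < (p : ℕ) := by
        simp [List.length_take] at hj; omega
      have hjt : j < t.length := lt_trans hj' p.isLt
      have := hp h0 ⟨j, hjt⟩ hj'
      simpa [List.getElem_take, List.get_eq_getElem] using this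
    · have hlen : ∀ i : Fin s.length, (i : ℕ) + 1 < (a :: s).length := by
        intro i; simpa using Nat.succ_lt_succ i.isLt
      have hgt : ∀ i : Fin s.length, (p : ℕ) + 1 ≤ (f ⟨(i : ℕ) + 1, hlen i⟩ : ℕ) := by
        intro i
        have : p < f ⟨(i : ℕ) + 1, hlen i⟩ := hm (by simp [Fin.lt_def])
        omega
      refine ⟨fun i => ⟨(f ⟨(i : ℕ) + 1, hlen i⟩ : ℕ) - ((p : ℕ) + 1), ?_⟩, ?_, ?_, ?_, ?_⟩
      · have h1 := (f ⟨(i : ℕ) + 1, hlen i⟩).isLt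
        have h2 := hgt i
        simp only [List.length_drop]
        omega
      · intro i j hij
        have h1 : f ⟨(i : ℕ) + 1, hlen i⟩ < f ⟨(j : ℕ) + 1, hlen j⟩ := by
          apply hm
          simp only [Fin.mk_lt_mk]
          exact Nat.succ_lt_succ hij
        have h2 := hgt i
        simp only [Fin.lt_def] at h1 ⊢
        omega
      · intro i
        have h1 := he ⟨(i : ℕ) + 1, hlen i⟩
        have h2 := hgt i
        simp only [List.get_eq_getElem] at h1 ⊢
        rw [List.getElem_drop]
        have h3 : s[(i : ℕ)] = t[(f ⟨(i : ℕ) + 1, hlen i⟩ : ℕ)] := by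
          simpa using h1
        rw [h3]
        congr 1
        omega
      · intro i hi j hfi hfj
        have hi2 : (i : ℕ) + 1 + 1 < (a :: s).length := by simpa using Nat.succ_lt_succ hi
        have hfi' : (f ⟨(i : ℕ) + 1, hlen i⟩ : ℕ) - ((p : ℕ) + 1) < (j : ℕ) := hfi
        have hfj' : (j : ℕ) < (f ⟨(i : ℕ) + 1 + 1, hi2⟩ : ℕ) - ((p : ℕ) + 1) := hfj
        have hA := hgt i
        have hB : (p : ℕ) + 1 ≤ (f ⟨(i : ℕ) + 1 + 1, hi2⟩ : ℕ) := hgt ⟨(i : ℕ) + 1, hi⟩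
        have hjt : (p : ℕ) + 1 + (j : ℕ) < t.length := by
          have := (f ⟨(i : ℕ) + 1 + 1, hi2⟩).isLt
          omega
        have h1 : f ⟨(i : ℕ) + 1, hlen i⟩ < (⟨(p : ℕ) + 1 + (j : ℕ), hjt⟩ : Fin t.length) := by
          simp only [Fin.lt_def]; omega
        have h2 : (⟨(p : ℕ) + 1 + (j : ℕ), hjt⟩ : Fin t.length) < f ⟨(i : ℕ) + 1 + 1, hi2⟩ := by
          simp only [Fin.lt_def]; omega
        have h3 := hg ⟨(i : ℕ) + 1, hlen i⟩ hi2 ⟨(p : ℕ) + 1 + (j : ℕ), hjt⟩ h1 h2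
        have h4 : s.get ⟨(i : ℕ) + 1, hi⟩ ≤ t[(p : ℕ) + 1 + (j : ℕ)] := h3
        simp only [List.get_eq_getElem] at h4 ⊢
        rw [List.getElem_drop]
        exact h4
      · intro hs j hj
        have h1 : (0 : ℕ) + 1 < (a :: s).length := by simpa using hs
        have hj' : (j : ℕ) < (f ⟨(0 : ℕ) + 1, h1⟩ : ℕ) - ((p : ℕ) + 1) := hj
        have hB : (p : ℕ) + 1 ≤ (f ⟨(0 : ℕ) + 1, h1⟩ : ℕ) := hgt ⟨0, hs⟩
        have hjt : (p : ℕ) + 1 + (j : ℕ) < t.length := by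
          have := (f ⟨(0 : ℕ) + 1, h1⟩).isLt
          omega
        have hA : p < (⟨(p : ℕ) + 1 + (j : ℕ), hjt⟩ : Fin t.length) := by
          simp only [Fin.lt_def]; omega
        have h2 : (⟨(p : ℕ) + 1 + (j : ℕ), hjt⟩ : Fin t.length) < f ⟨(0 : ℕ) + 1, h1⟩ := by
          simp only [Fin.lt_def]; omega
        have h3 := hg ⟨0, h0⟩ h1 ⟨(p : ℕ) + 1 + (j : ℕ), hjt⟩ hA h2
        have h4 : s.get ⟨0, hs⟩ ≤ t[(p : ℕ) + 1 + (j : ℕ)] := h3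
        simp only [List.get_eq_getElem] at h4 ⊢
        rw [List.getElem_drop]
        exact h4
  · rintro ⟨t1, t2, rfl, h1, f, hm, he, hg, hp⟩
    have hplt : t1.length < (t1 ++ a :: t2).length := by simp
    have hF : ∀ k : Fin s.length, t1.length + 1 + (f k : ℕ) < (t1 ++ a :: t2).length := by
      intro k; have := (f k).isLt; simp; omega
    have hslen : ∀ k : ℕ, k + 1 < (a :: s).length → k < s.length := by
      intro k hk; simpa using hk
    refine ⟨fun i =>
      if h : (i : ℕ) = 0 then ⟨t1.length, hplt⟩
      else ⟨t1.length + 1 + (f ⟨(i : ℕ) - 1, by have := i.isLt; simp only [List.length_cons] at this; omega⟩ : ℕ),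
        hF _⟩, ?_, ?_, ?_, ?_⟩
    · intro i j hij
      rcases i with ⟨i, hi⟩; rcases j with ⟨j, hj⟩
      have hij' : i < j := hij
      match i, j with
      | 0, 0 => omega
      | 0, m + 1 =>
        show (⟨t1.length, hplt⟩ : Fin _) < ⟨t1.length + 1 + (f ⟨m, hslen m hj⟩ : ℕ), hF _⟩
        simp only [Fin.mk_lt_mk]; omega
      | k + 1, 0 => omega
      | k + 1, m + 1 =>
        show (⟨t1.length + 1 + (f ⟨k, hslen k hi⟩ : ℕ), hF _⟩ : Fin _) <
          ⟨t1.length + 1 + (f ⟨m, hslen m hj⟩ : ℕ), hF _⟩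
        have : f ⟨k, hslen k hi⟩ < f ⟨m, hslen m hj⟩ := by
          apply hm; simp only [Fin.mk_lt_mk]; omega
        simp only [Fin.lt_def] at this ⊢
        omega
    · intro i
      rcases i with ⟨i, hi⟩
      match i with
      | 0 =>
        show a = (t1 ++ a :: t2).get ⟨t1.length, hplt⟩
        simp only [List.get_eq_getElem]
        rw [List.getElem_append_right (le_refl t1.length)]
        simp
      | k + 1 =>
        show s.get ⟨k, hslen k hi⟩ =
          (t1 ++ a :: t2).get ⟨t1.length + 1 + (f ⟨k, hslen k hi⟩ : ℕ), hF _⟩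
        simp only [List.get_eq_getElem]
        rw [List.getElem_append_right (by omega)]
        simp only [List.getElem_cons]
        rw [dif_neg (by omega)]
        have h5 := he ⟨k, hslen k hi⟩
        simp only [List.get_eq_getElem] at h5
        rw [h5]
        congr 1
        omega
    · intro i hi j hFi hFj
      rcases i with ⟨i, hii⟩
      rcases j with ⟨j, hjj⟩
      have hval : ∀ x ∈ t1 ++ a :: t2, True := fun _ _ => trivial
      match i, hii, hi with
      | 0, hii, hi =>
        have hs0 : 0 < s.length := hslen 0 (by simpa using hi)
        have hFi' : t1.length < j := hFi
        have hFj' : j < t1.length + 1 + (f ⟨0, hs0⟩ : ℕ) := hFj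
        have hj2 : j - (t1.length + 1) < t2.length := by
          have := (f ⟨0, hs0⟩).isLt; omega
        have h2 := hp hs0 ⟨j - (t1.length + 1), hj2⟩ (by simp only [Fin.lt_def]; omega)
        have h3 : s[(0 : ℕ)]'hs0 ≤ t2[j - (t1.length + 1)] := h2
        show s[(0 : ℕ)]'(by simpa using hi) ≤ (t1 ++ a :: t2)[j]
        rw [List.getElem_append_right (by omega : t1.length ≤ j)]
        simp only [List.getElem_cons]
        rw [dif_neg (by omega)]
        have hidx : j - t1.length - 1 = j - (t1.length + 1) := by omega
        simp only [hidx]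
        exact h3
      | k + 1, hii, hi =>
        have hsk : k < s.length := hslen k hii
        have hsk1 : k + 1 < s.length := hslen (k + 1) (by simpa using hi)
        have hFi' : t1.length + 1 + (f ⟨k, hsk⟩ : ℕ) < j := hFi
        have hFj' : j < t1.length + 1 + (f ⟨k + 1, hsk1⟩ : ℕ) := hFj
        have hj2 : j - (t1.length + 1) < t2.length := by
          have := (f ⟨k + 1, hsk1⟩).isLt; omega
        have hh1 : f ⟨k, hsk⟩ < (⟨j - (t1.length + 1), hj2⟩ : Fin t2.length) := by
          simp only [Fin.lt_def]; omega
        have hh2 : (⟨j - (t1.length + 1), hj2⟩ : Fin t2.length) < f ⟨k + 1, hsk1⟩ := by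
          simp only [Fin.lt_def]; omega
        have h2 := hg ⟨k, hsk⟩ hsk1 ⟨j - (t1.length + 1), hj2⟩ hh1 hh2
        have h3 : s[k + 1]'hsk1 ≤ t2[j - (t1.length + 1)] := h2
        show s[k + 1]'(by simpa using hi) ≤ (t1 ++ a :: t2)[j]
        rw [List.getElem_append_right (by omega : t1.length ≤ j)]
        simp only [List.getElem_cons]
        rw [dif_neg (by omega)]
        have hidx : j - t1.length - 1 = j - (t1.length + 1) := by omega
        simp only [hidx]
        exact h3
    · intro hs j hj
      rcases j with ⟨j, hjj⟩
      have hj' : j < t1.length := hj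
      show a ≤ (t1 ++ a :: t2)[j]
      rw [List.getElem_append_left hj']
      exact h1 _ (List.getElem_mem hj')
lemma Higman_nil {X : Type*} (r : X → X → Prop) (v : List X) : Higman r [] v :=
  ⟨Fin.elim0, fun i => i.elim0, fun i => i.elim0⟩

lemma not_Higman_cons_nil {X : Type*} (r : X → X → Prop) (a : X) (u : List X) :
    ¬ Higman r (a :: u) [] := by
  rintro ⟨f, -⟩
  exact (f ⟨0, by simp⟩).elim0

lemma Higman_cons_iff {X : Type*} (r : X → X → Prop) (a : X) (u v : List X) :
    Higman r (a :: u) v ↔ ∃ v1 b v2, v = v1 ++ b :: v2 ∧ r a b ∧ Higman r u v2 := by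
  constructor
  · rintro ⟨f, hm, he⟩
    have h0 : 0 < (a :: u).length := by simp
    set p : Fin v.length := f ⟨0, h0⟩ with hpdef
    refine ⟨v.take p, v.get p, v.drop (p + 1), ?_, ?_, ?_⟩
    · conv_lhs => rw [← List.take_append_drop (p : ℕ) v, List.drop_eq_getElem_cons p.isLt]
      rfl
    · exact (he ⟨0, h0⟩ : r a (v.get p))
    · have hlen : ∀ i : Fin u.length, (i : ℕ) + 1 < (a :: u).length := by
        intro i; simpa using Nat.succ_lt_succ i.isLt
      have hgt : ∀ i : Fin u.length, (p : ℕ) + 1 ≤ (f ⟨(i : ℕ) + 1, hlen i⟩ : ℕ) := by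
        intro i
        have : p < f ⟨(i : ℕ) + 1, hlen i⟩ := hm (by simp [Fin.lt_def])
        omega
      refine ⟨fun i => ⟨(f ⟨(i : ℕ) + 1, hlen i⟩ : ℕ) - ((p : ℕ) + 1), ?_⟩, ?_, ?_⟩
      · have h1 := (f ⟨(i : ℕ) + 1, hlen i⟩).isLt
        have h2 := hgt i
        simp only [List.length_drop]
        omega
      · intro i j hij
        have h1 : f ⟨(i : ℕ) + 1, hlen i⟩ < f ⟨(j : ℕ) + 1, hlen j⟩ := by
          apply hm
          simp only [Fin.mk_lt_mk]
          exact Nat.succ_lt_succ hij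
        have h2 := hgt i
        simp only [Fin.lt_def] at h1 ⊢
        omega
      · intro i
        have h1 : r ((a :: u).get ⟨(i : ℕ) + 1, hlen i⟩) (v.get (f ⟨(i : ℕ) + 1, hlen i⟩)) :=
          he ⟨(i : ℕ) + 1, hlen i⟩
        have h2 := hgt i
        have h3 : u.get i = (a :: u).get ⟨(i : ℕ) + 1, hlen i⟩ := rfl
        rw [h3]
        have h4 : (v.drop ((p : ℕ) + 1)).get
            ⟨(f ⟨(i : ℕ) + 1, hlen i⟩ : ℕ) - ((p : ℕ) + 1), by
              have := (f ⟨(i : ℕ) + 1, hlen i⟩).isLt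
              simp only [List.length_drop]; omega⟩ = v.get (f ⟨(i : ℕ) + 1, hlen i⟩) := by
          simp only [List.get_eq_getElem, List.getElem_drop]
          congr 1
          omega
        exact h4 ▸ h1
  · rintro ⟨v1, b, v2, rfl, hab, f, hm, he⟩
    have hplt : v1.length < (v1 ++ b :: v2).length := by simp
    have hF : ∀ k : Fin u.length, v1.length + 1 + (f k : ℕ) < (v1 ++ b :: v2).length := by
      intro k; have := (f k).isLt; simp; omega
    have hslen : ∀ k : ℕ, k + 1 < (a :: u).length → k < u.length := by
      intro k hk; simpa using hk
    refine ⟨fun i =>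
      if h : (i : ℕ) = 0 then ⟨v1.length, hplt⟩
      else ⟨v1.length + 1 + (f ⟨(i : ℕ) - 1, by
        have := i.isLt; simp only [List.length_cons] at this; omega⟩ : ℕ), hF _⟩, ?_, ?_⟩
    · intro i j hij
      rcases i with ⟨i, hi⟩; rcases j with ⟨j, hj⟩
      have hij' : i < j := hij
      match i, j with
      | 0, 0 => omega
      | 0, m + 1 =>
        show (⟨v1.length, hplt⟩ : Fin _) < ⟨v1.length + 1 + (f ⟨m, hslen m hj⟩ : ℕ), hF _⟩
        simp only [Fin.mk_lt_mk]; omega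
      | k + 1, 0 => omega
      | k + 1, m + 1 =>
        show (⟨v1.length + 1 + (f ⟨k, hslen k hi⟩ : ℕ), hF _⟩ : Fin _) <
          ⟨v1.length + 1 + (f ⟨m, hslen m hj⟩ : ℕ), hF _⟩
        have : f ⟨k, hslen k hi⟩ < f ⟨m, hslen m hj⟩ := by
          apply hm; simp only [Fin.mk_lt_mk]; omega
        simp only [Fin.lt_def] at this ⊢
        omega
    · intro i
      rcases i with ⟨i, hi⟩
      match i with
      | 0 =>
        show r a ((v1 ++ b :: v2).get ⟨v1.length, hplt⟩)
        have : (v1 ++ b :: v2).get ⟨v1.length, hplt⟩ = b := by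
          simp only [List.get_eq_getElem]
          rw [List.getElem_append_right (le_refl v1.length)]
          simp
        rw [this]; exact hab
      | k + 1 =>
        show r (u.get ⟨k, hslen k hi⟩)
          ((v1 ++ b :: v2).get ⟨v1.length + 1 + (f ⟨k, hslen k hi⟩ : ℕ), hF _⟩)
        have h4 : (v1 ++ b :: v2).get ⟨v1.length + 1 + (f ⟨k, hslen k hi⟩ : ℕ), hF _⟩ =
            v2.get (f ⟨k, hslen k hi⟩) := by
          simp only [List.get_eq_getElem]
          rw [List.getElem_append_right (by omega)]
          simp only [List.getElem_cons]
          rw [dif_neg (by omega)]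
          congr 1
          omega
        rw [h4]
        exact he ⟨k, hslen k hi⟩
def GapR : List ℕ → List ℕ → Prop
  | [], _ => True
  | _ :: _, [] => False
  | a :: s, b :: t => (a = b ∧ GapR s t) ∨ (a ≤ b ∧ GapR (a :: s) t)

def HigR {X : Type*} (r : X → X → Prop) : List X → List X → Prop
  | [], _ => True
  | _ :: _, [] => False
  | a :: u, b :: v => (r a b ∧ HigR r u v) ∨ HigR r (a :: u) v

lemma GapR_cons_iff (a : ℕ) (s t : List ℕ) :
    GapR (a :: s) t ↔ ∃ t1 t2, t = t1 ++ a :: t2 ∧ (∀ x ∈ t1, a ≤ x) ∧ GapR s t2 := by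
  induction t with
  | nil =>
    simp only [GapR]
    constructor
    · exact fun h => h.elim
    · rintro ⟨t1, t2, h, -⟩
      exact absurd h (by simp)
  | cons b t ih =>
    constructor
    · rintro (⟨rfl, h⟩ | ⟨hab, h⟩)
      · exact ⟨[], t, rfl, by simp, h⟩
      · obtain ⟨t1, t2, rfl, h1, h2⟩ := ih.mp h
        exact ⟨b :: t1, t2, rfl, by
          intro x hx
          rcases List.mem_cons.mp hx with rfl | hx
          · exact hab
          · exact h1 x hx, h2⟩
    · rintro ⟨t1, t2, he, h1, h2⟩
      match t1, he with
      | [], he =>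
        simp only [List.nil_append, List.cons.injEq] at he
        exact Or.inl ⟨he.1.symm, he.2 ▸ h2⟩
      | c :: t1, he =>
        simp only [List.cons_append, List.cons.injEq] at he
        refine Or.inr ⟨he.1 ▸ h1 c (by simp), ?_⟩
        exact ih.mpr ⟨t1, t2, he.2, fun x hx => h1 x (by simp [hx]), h2⟩

lemma HigR_cons_iff {X : Type*} (r : X → X → Prop) (a : X) (u v : List X) :
    HigR r (a :: u) v ↔ ∃ v1 b v2, v = v1 ++ b :: v2 ∧ r a b ∧ HigR r u v2 := by
  induction v with
  | nil =>
    simp only [HigR]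
    constructor
    · exact fun h => h.elim
    · rintro ⟨v1, b, v2, h, -⟩
      exact absurd h (by simp)
  | cons c v ih =>
    constructor
    · rintro (⟨hab, h⟩ | h)
      · exact ⟨[], c, v, rfl, hab, h⟩
      · obtain ⟨v1, b, v2, rfl, h1, h2⟩ := ih.mp h
        exact ⟨c :: v1, b, v2, rfl, h1, h2⟩
    · rintro ⟨v1, b, v2, he, h1, h2⟩
      match v1, he with
      | [], he =>
        simp only [List.nil_append, List.cons.injEq] at he
        exact Or.inl ⟨he.1.symm ▸ h1, he.2 ▸ h2⟩
      | c' :: v1, he =>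
        simp only [List.cons_append, List.cons.injEq] at he
        exact Or.inr (ih.mpr ⟨v1, b, v2, he.2, h1, h2⟩)

lemma gapS_iff_GapR (s t : List ℕ) : gapS s t ↔ GapR s t := by
  induction s generalizing t with
  | nil => simpa [GapR] using gapS_nil t
  | cons a s ih =>
    rw [gapS_cons_iff, GapR_cons_iff]
    constructor
    · rintro ⟨t1, t2, h1, h2, h3⟩
      exact ⟨t1, t2, h1, h2, (ih t2).mp h3⟩
    · rintro ⟨t1, t2, h1, h2, h3⟩
      exact ⟨t1, t2, h1, h2, (ih t2).mpr h3⟩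

lemma Higman_iff_HigR {X : Type*} (r : X → X → Prop) (u v : List X) :
    Higman r u v ↔ HigR r u v := by
  induction u generalizing v with
  | nil => simpa [HigR] using Higman_nil r v
  | cons a u ih =>
    rw [Higman_cons_iff, HigR_cons_iff]
    constructor
    · rintro ⟨v1, b, v2, h1, h2, h3⟩
      exact ⟨v1, b, v2, h1, h2, (ih v2).mp h3⟩
    · rintro ⟨v1, b, v2, h1, h2, h3⟩
      exact ⟨v1, b, v2, h1, h2, (ih v2).mpr h3⟩
@[simp] lemma GapR_nill (t : List ℕ) : GapR [] t = True := by cases t <;> rfl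
@[simp] lemma GapR_cons_nil (a : ℕ) (s : List ℕ) : GapR (a :: s) [] = False := rfl
@[simp] lemma GapR_cons_cons (a b : ℕ) (s t : List ℕ) :
    GapR (a :: s) (b :: t) = ((a = b ∧ GapR s t) ∨ (a ≤ b ∧ GapR (a :: s) t)) := rfl
@[simp] lemma HigR_nil {X : Type*} (r : X → X → Prop) (v : List X) : HigR r [] v = True := by cases v <;> rfl
@[simp] lemma HigR_cons_nil {X : Type*} (r : X → X → Prop) (a : X) (u : List X) :
    HigR r (a :: u) [] = False := rfl
@[simp] lemma HigR_cons_cons {X : Type*} (r : X → X → Prop) (a b : X) (u v : List X) :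
    HigR r (a :: u) (b :: v) = ((r a b ∧ HigR r u v) ∨ HigR r (a :: u) v) := rfl

def enc1 (a : List ℕ) : List ℕ := a.map (· + 1)

def encT : List (List ℕ) → List ℕ
  | [] => []
  | b :: L => 0 :: (enc1 b ++ encT L)

def enc (a : List ℕ) (L : List (List ℕ)) : List ℕ := enc1 a ++ encT L

lemma enc_cons (x : ℕ) (a : List ℕ) (L : List (List ℕ)) :
    enc (x :: a) L = (x + 1) :: enc a L := rfl

lemma enc_nil_nil : enc [] [] = [] := rfl

lemma enc_nil_cons (b : List ℕ) (L : List (List ℕ)) :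
    enc [] (b :: L) = 0 :: enc b L := rfl

lemma not_GapR_succ_encT (x : ℕ) (s : List ℕ) (M : List (List ℕ)) :
    ¬ GapR ((x + 1) :: s) (enc [] M) := by
  cases M with
  | nil => rw [enc_nil_nil]; simp
  | cons d M' => rw [enc_nil_cons]; simp

lemma key (N : ℕ) : ∀ (a : List ℕ) (L : List (List ℕ)) (c : List ℕ) (M : List (List ℕ)),
    (enc a L).length + (enc c M).length < N →
    (GapR (enc a L) (enc c M) ↔ GapR a c ∧ HigR (fun u v => GapR u v) L M) := by
  induction N with
  | zero => intro a L c M h; exact absurd h (Nat.not_lt_zero _)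
  | succ N ih =>
    intro a L c M hN
    match a, L, c, M with
    | x :: a', L, y :: c', M =>
      simp only [enc_cons, List.length_cons] at hN
      have h1 := ih a' L c' M (by omega)
      have h2 := ih (x :: a') L c' M (by simp only [enc_cons, List.length_cons]; omega)
      rw [enc_cons] at h2
      rw [enc_cons, enc_cons, GapR_cons_cons, h1, h2, GapR_cons_cons]
      have e1 : x + 1 = y + 1 ↔ x = y := by omega
      have e2 : x + 1 ≤ y + 1 ↔ x ≤ y := by omega
      rw [e1, e2]
      tauto
    | x :: a', L, [], M =>
      constructor
      · intro h
        rw [enc_cons] at h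
        exact absurd h (not_GapR_succ_encT x _ M)
      · rintro ⟨h, -⟩
        simp at h
    | [], [], c, M =>
      rw [enc_nil_nil]
      simp
    | [], b :: L', y :: c', M =>
      simp only [enc_nil_cons, enc_cons, List.length_cons] at hN
      have h2 := ih [] (b :: L') c' M (by simp only [enc_nil_cons, List.length_cons]; omega)
      rw [enc_nil_cons] at h2
      rw [enc_nil_cons, enc_cons, GapR_cons_cons, h2]
      simp
    | [], b :: L', [], [] =>
      rw [enc_nil_cons, enc_nil_nil]
      simp
    | [], b :: L', [], d :: M' =>
      simp only [enc_nil_cons, List.length_cons] at hN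
      have h1 := ih b L' d M' (by omega)
      have h2 := ih [] (b :: L') d M' (by simp only [enc_nil_cons, List.length_cons]; omega)
      rw [enc_nil_cons] at h2
      rw [enc_nil_cons, enc_nil_cons, GapR_cons_cons, h1, h2]
      simp
lemma mem_enc_lt {n : ℕ} (a : List ℕ) (L : List (List ℕ))
    (ha : ∀ x ∈ a, x < n) (hL : ∀ b ∈ L, ∀ x ∈ b, x < n) :
    ∀ x ∈ enc a L, x < n + 1 := by
  intro x hx
  rw [enc, List.mem_append] at hx
  rcases hx with hx | hx
  · obtain ⟨y, hy, rfl⟩ := List.mem_map.mp hx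
    exact Nat.succ_lt_succ (ha y hy)
  · induction L with
    | nil => simp [encT] at hx
    | cons b L ihL =>
      rw [encT] at hx
      rcases List.mem_cons.mp hx with rfl | hx
      · omega
      · rcases List.mem_append.mp hx with hx | hx
        · obtain ⟨y, hy, rfl⟩ := List.mem_map.mp hx
          exact Nat.succ_lt_succ (hL b (by simp) y hy)
        · exact ihL (fun b' hb' => hL b' (by simp [hb'])) hx

lemma enc_inj (N : ℕ) : ∀ (a : List ℕ) (L : List (List ℕ)) (a' : List ℕ) (L' : List (List ℕ)),
    (enc a L).length < N → enc a L = enc a' L' → a = a' ∧ L = L' := by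
  induction N with
  | zero => intro a L a' L' h; exact absurd h (Nat.not_lt_zero _)
  | succ N ih =>
    intro a L a' L' hN he
    match a, L, a', L' with
    | x :: a, L, x' :: a', L' =>
      rw [enc_cons, enc_cons] at he
      simp only [List.cons.injEq] at he
      have h2 := ih a L a' L' (by
        rw [enc_cons, List.length_cons] at hN; omega) he.2
      refine ⟨by rw [show x = x' from by omega, h2.1], h2.2⟩
    | x :: a, L, [], [] => rw [enc_cons, enc_nil_nil] at he; simp at he
    | x :: a, L, [], b' :: L'' => rw [enc_cons, enc_nil_cons] at he; simp at he
    | [], [], x' :: a', L' => rw [enc_cons, enc_nil_nil] at he; simp at he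
    | [], b :: L, x' :: a', L' => rw [enc_cons, enc_nil_cons] at he; simp at he
    | [], [], [], [] => exact ⟨rfl, rfl⟩
    | [], [], [], b' :: L' => rw [enc_nil_nil, enc_nil_cons] at he; simp at he
    | [], b :: L, [], [] => rw [enc_nil_nil, enc_nil_cons] at he; simp at he
    | [], b :: L, [], b' :: L' =>
      rw [enc_nil_cons, enc_nil_cons] at he
      simp only [List.cons.injEq, true_and] at he
      have h2 := ih b L b' L' (by
        rw [enc_nil_cons, List.length_cons] at hN; omega) he
      rw [h2.1, h2.2]
      exact ⟨rfl, rfl⟩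

lemma enc_surj (n : ℕ) : ∀ s : List ℕ, (∀ x ∈ s, x < n + 1) →
    ∃ (a : List ℕ) (L : List (List ℕ)),
      (∀ x ∈ a, x < n) ∧ (∀ b ∈ L, ∀ x ∈ b, x < n) ∧ enc a L = s := by
  intro s
  induction s with
  | nil => exact fun _ => ⟨[], [], by simp, by simp, rfl⟩
  | cons z s ihs =>
    intro hb
    obtain ⟨a, L, ha, hL, henc⟩ := ihs (fun x hx => hb x (by simp [hx]))
    match z, hb with
    | 0, hb => exact ⟨[], a :: L, by simp, by
        intro b hb' x hx
        rcases List.mem_cons.mp hb' with rfl | hb'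
        · exact ha x hx
        · exact hL b hb' x hx, by rw [enc_nil_cons, henc]⟩
    | w + 1, hb =>
      refine ⟨w :: a, L, ?_, hL, by rw [enc_cons, henc]⟩
      intro x hx
      rcases List.mem_cons.mp hx with rfl | hx
      · have := hb (x + 1) (by simp); omega
      · exact ha x hx

lemma HigR_map_iff {X Y : Type*} (g : X → Y) (r : Y → Y → Prop) (r' : X → X → Prop)
    (hr : ∀ a b, r (g a) (g b) ↔ r' a b) :
    ∀ (v u : List X), HigR r (u.map g) (v.map g) ↔ HigR r' u v := by
  intro v
  induction v with
  | nil => intro u; cases u <;> simp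
  | cons b v ihv =>
    intro u
    cases u with
    | nil => simp
    | cons a u =>
      simp only [List.map_cons, HigR_cons_cons]
      rw [hr, ihv u]
      have h2 := ihv (a :: u)
      rw [List.map_cons] at h2
      rw [h2]

/-- Sequences over `{0, …, n-1}`. -/
def SeqN (n : ℕ) := {l : List ℕ // ∀ x ∈ l, x < n}

/-- `S_{n+1}^s` is order-isomorphic to `S_n^s × (S_n^s)^*`,
with the Higman ordering induced by `≤_gap^s` on the second factor. -/
theorem stmt1 (n : ℕ) :
    ∃ h : SeqN (n + 1) ≃ SeqN n × List (SeqN n),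
      ∀ s t : SeqN (n + 1),
        gapS s.1 t.1 ↔
          (gapS (h s).1.1 (h t).1.1 ∧
            Higman (fun a b : SeqN n => gapS a.1 b.1) (h s).2 (h t).2) := by
  classical
  set F : SeqN n × List (SeqN n) → SeqN (n + 1) := fun p =>
    ⟨enc p.1.1 (p.2.map Subtype.val), by
      apply mem_enc_lt
      · exact p.1.2
      · intro b hb x hx
        obtain ⟨b', _, rfl⟩ := List.mem_map.mp hb
        exact b'.2 x hx⟩ with hFdef
  have hinj : Function.Injective F := by
    intro p q hpq
    have h1 : enc p.1.1 (p.2.map Subtype.val) = enc q.1.1 (q.2.map Subtype.val) :=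
      congrArg Subtype.val hpq
    have h2 := enc_inj ((enc p.1.1 (p.2.map Subtype.val)).length + 1) _ _ _ _
      (Nat.lt_succ_self _) h1
    have h3 : p.1 = q.1 := Subtype.ext h2.1
    have h4 : p.2 = q.2 := by
      have := h2.2
      exact List.map_injective_iff.mpr Subtype.val_injective this
    exact Prod.ext h3 h4
  have hsurj : Function.Surjective F := by
    intro s
    obtain ⟨a, L, ha, hL, henc⟩ := enc_surj n s.1 s.2
    refine ⟨(⟨a, ha⟩, L.attach.map (fun b => ⟨b.1, hL b.1 b.2⟩)), ?_⟩
    apply Subtype.ext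
    show enc a ((L.attach.map (fun b => (⟨b.1, hL b.1 b.2⟩ : SeqN n))).map Subtype.val) = s.1
    rw [List.map_map]
    have : (L.attach.map (Subtype.val ∘ fun b => (⟨b.1, hL b.1 b.2⟩ : SeqN n))) = L := by
      simp
    rw [this, henc]
  set e : (SeqN n × List (SeqN n)) ≃ SeqN (n + 1) := Equiv.ofBijective F ⟨hinj, hsurj⟩ with hedef
  refine ⟨e.symm, ?_⟩
  intro s t
  have hs : F (e.symm s) = s := e.apply_symm_apply s
  have ht : F (e.symm t) = t := e.apply_symm_apply t
  have hs1 : s.1 = enc (e.symm s).1.1 ((e.symm s).2.map Subtype.val) :=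
    (congrArg Subtype.val hs).symm
  have ht1 : t.1 = enc (e.symm t).1.1 ((e.symm t).2.map Subtype.val) :=
    (congrArg Subtype.val ht).symm
  rw [gapS_iff_GapR, hs1, ht1,
    key ((enc (e.symm s).1.1 ((e.symm s).2.map Subtype.val)).length +
      (enc (e.symm t).1.1 ((e.symm t).2.map Subtype.val)).length + 1) _ _ _ _
      (Nat.lt_succ_self _)]
  rw [← gapS_iff_GapR]
  constructor
  · rintro ⟨h1, h2⟩
    refine ⟨h1, ?_⟩
    rw [Higman_iff_HigR]
    exact (HigR_map_iff Subtype.val (fun u v => GapR u v)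
      (fun a b : SeqN n => gapS a.1 b.1)
      (fun a b => (gapS_iff_GapR a.1 b.1).symm) (e.symm t).2 (e.symm s).2).mp h2
  · rintro ⟨h1, h2⟩
    refine ⟨h1, ?_⟩
    rw [Higman_iff_HigR] at h2
    exact (HigR_map_iff Subtype.val (fun u v => GapR u v)
      (fun a b : SeqN n => gapS a.1 b.1)
      (fun a b => (gapS_iff_GapR a.1 b.1).symm) (e.symm t).2 (e.symm s).2).mpr h2
end

section
/- The map sending a sequence s_0...s_{k-1} over {0,...,n-1} to 0 s_0 ... s_{k-1} is a quasi-embedding from (S_n, ≤_{gap}^w) to (S_n[0], ≤_{gap}^w), where S_n[0] consists of sequences starting with 0 (or empty). -/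
/-- The weak gap-embeddability relation on finite sequences of naturals. -/
def gapW (s t : List ℕ) : Prop :=
  ∃ f : Fin s.length → Fin t.length, StrictMono f ∧
    (∀ i : Fin s.length, s.get i = t.get (f i)) ∧
    (∀ i : Fin s.length, ∀ hi : (i : ℕ) + 1 < s.length, ∀ j : Fin t.length,
      f i < j → j < f ⟨(i : ℕ) + 1, hi⟩ → s.get ⟨(i : ℕ) + 1, hi⟩ ≤ t.get j)

lemma get_cons_sub (a : ℕ) (t : List ℕ) (j : Fin (a :: t).length) (h : 1 ≤ (j : ℕ))
    (hj : (j : ℕ) - 1 < t.length) : (a :: t).get j = t.get ⟨(j : ℕ) - 1, hj⟩ := by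
  obtain ⟨m, hm⟩ := j
  cases m with
  | zero => simp at h
  | succ k => rfl

/-- Prepending `0` is a quasi-embedding from `(S_n, ≤_gap^w)` into `(S_n[0], ≤_gap^w)`. -/
theorem stmt2 (n : ℕ) (s t : List ℕ) (hs : ∀ x ∈ s, x < n) (ht : ∀ x ∈ t, x < n) :
    gapW (0 :: s) (0 :: t) → gapW s t := by
  rintro ⟨f, hmono, hval, hgap⟩
  have hlen : ∀ i : Fin s.length, (i : ℕ) + 1 < (0 :: s).length := by
    intro i; exact Nat.succ_lt_succ i.isLt
  have hpos : ∀ k (hk : k < (0 :: s).length), 0 < k → 1 ≤ (f ⟨k, hk⟩ : ℕ) := by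
    intro k hk hk0
    have h0 : (⟨0, Nat.succ_pos _⟩ : Fin (0 :: s).length) < ⟨k, hk⟩ := hk0
    have := hmono h0
    rw [Fin.lt_def] at this
    omega
  have hltt : ∀ j : Fin (0 :: t).length, (j : ℕ) < t.length + 1 := fun j => j.isLt
  have hlt : ∀ i : Fin s.length, (f ⟨(i : ℕ) + 1, hlen i⟩ : ℕ) - 1 < t.length := by
    intro i
    have h1 := hltt (f ⟨(i : ℕ) + 1, hlen i⟩)
    have h2 := hpos _ (hlen i) (Nat.succ_pos _)
    omega
  refine ⟨fun i => ⟨(f ⟨(i : ℕ) + 1, hlen i⟩ : ℕ) - 1, hlt i⟩, ?_, ?_, ?_⟩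
  · intro a b hab
    have h1 : (⟨(a : ℕ) + 1, hlen a⟩ : Fin (0 :: s).length) < ⟨(b : ℕ) + 1, hlen b⟩ :=
      Nat.succ_lt_succ hab
    have h := hmono h1
    rw [Fin.lt_def] at h
    have h2 := hpos _ (hlen a) (Nat.succ_pos _)
    show ((f ⟨(a : ℕ) + 1, hlen a⟩ : ℕ) - 1) < ((f ⟨(b : ℕ) + 1, hlen b⟩ : ℕ) - 1)
    omega
  · intro i
    have h := hval ⟨(i : ℕ) + 1, hlen i⟩
    have hv : (0 :: s).get ⟨(i : ℕ) + 1, hlen i⟩ = s.get i := rfl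
    rw [hv, get_cons_sub 0 t _ (hpos _ (hlen i) (Nat.succ_pos _)) (hlt i)] at h
    exact h
  · intro i hi j hj1 hj2
    have hi' : ((⟨(i : ℕ) + 1, hlen i⟩ : Fin (0 :: s).length) : ℕ) + 1 < (0 :: s).length :=
      Nat.succ_lt_succ hi
    have hj' : (j : ℕ) + 1 < (0 :: t).length := Nat.succ_lt_succ j.isLt
    have hp1 := hpos _ (hlen i) (Nat.succ_pos _)
    have hp2 := hpos _ hi' (Nat.succ_pos _)
    have hlt1 : (f ⟨(i : ℕ) + 1, hlen i⟩ : ℕ) - 1 < (j : ℕ) := hj1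
    have hlt2 : (j : ℕ) < (f ⟨(i : ℕ) + 1 + 1, hlen ⟨(i : ℕ) + 1, hi⟩⟩ : ℕ) - 1 := hj2
    have hp2' := hpos _ (hlen ⟨(i : ℕ) + 1, hi⟩) (Nat.succ_pos _)
    have key := hgap ⟨(i : ℕ) + 1, hlen i⟩ (hlen ⟨(i : ℕ) + 1, hi⟩) ⟨(j : ℕ) + 1, hj'⟩
      (show (f ⟨(i : ℕ) + 1, hlen i⟩ : ℕ) < (j : ℕ) + 1 by omega)
      (show ((j : ℕ) + 1) < (f ⟨(i : ℕ) + 1 + 1, hlen ⟨(i : ℕ) + 1, hi⟩⟩ : ℕ) by omega)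
    have h1 : (0 :: s).get ⟨(i : ℕ) + 1 + 1, hlen ⟨(i : ℕ) + 1, hi⟩⟩ = s.get ⟨(i : ℕ) + 1, hi⟩ := rfl
    have h2 : (0 :: t).get ⟨(j : ℕ) + 1, hj'⟩ = t.get j := by
      obtain ⟨m, hm⟩ := j; rfl
    rw [h1, h2] at key
    exact key
end

section
/- If Ω₁·α + β < Ω₁·γ + δ with α, γ < ε₀ and β, δ < Ω₁ (Ω₁ the first uncountable ordinal), and β < ω^(ω^γ)·δ, then ω^(ω^α)·β < ω^(ω^γ)·δ. -/
open Ordinal Cardinal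

/-- The least ordinal `ε` with `ω^ε = ε`. -/
noncomputable def eps0 : Ordinal := Ordinal.nfp (fun a => omega0 ^ a) 0

/-- The first uncountable ordinal. -/
noncomputable def Omega1 : Ordinal := (aleph 1).ord

/-- If `Ω₁·α + β < Ω₁·γ + δ` with `α, γ < ε₀`, `β, δ < Ω₁` and `β < ω^(ω^γ)·δ`,
then `ω^(ω^α)·β < ω^(ω^γ)·δ`. -/
theorem stmt10 (α β γ δ : Ordinal) (hα : α < eps0) (hγ : γ < eps0)
    (hβ : β < Omega1) (hδ : δ < Omega1)
    (h : Omega1 * α + β < Omega1 * γ + δ)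
    (h2 : β < omega0 ^ (omega0 ^ γ) * δ) :
    omega0 ^ (omega0 ^ α) * β < omega0 ^ (omega0 ^ γ) * δ := by
  have hΩpos : (0 : Ordinal) < Omega1 := by
    simpa [Omega1, Cardinal.ord_zero] using Cardinal.ord_lt_ord.mpr (aleph_pos 1)
  have hαγ : α ≤ γ := by
    have h1 : Omega1 * α < Omega1 * (γ + 1) := by
      calc Omega1 * α ≤ Omega1 * α + β := le_add_right le_rfl
        _ < Omega1 * γ + δ := h
        _ ≤ Omega1 * γ + Omega1 := add_le_add_right hδ.le _
        _ = Omega1 * (γ + 1) := by rw [mul_add_one]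
    have := (mul_lt_mul_iff_right₀ hΩpos).mp h1
    exact Order.lt_add_one_iff.mp this
  have hpos : (0 : Ordinal) < omega0 ^ (omega0 ^ α) := opow_pos _ omega0_pos
  rcases lt_or_eq_of_le hαγ with hlt | heq
  · have habs : omega0 ^ α + omega0 ^ γ = omega0 ^ γ :=
      add_omega0_opow ((opow_lt_opow_iff_right one_lt_omega0).mpr hlt)
    calc omega0 ^ (omega0 ^ α) * β
        < omega0 ^ (omega0 ^ α) * (omega0 ^ (omega0 ^ γ) * δ) :=
          (mul_lt_mul_iff_right₀ hpos).mpr h2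
      _ = omega0 ^ (omega0 ^ α) * omega0 ^ (omega0 ^ γ) * δ := (mul_assoc _ _ _).symm
      _ = omega0 ^ (omega0 ^ α + omega0 ^ γ) * δ := by rw [← opow_add]
      _ = omega0 ^ (omega0 ^ γ) * δ := by rw [habs]
  · subst heq
    have hβδ : β < δ := by
      exact (add_lt_add_iff_left (Omega1 * α)).mp h
    exact (mul_lt_mul_iff_right₀ (opow_pos _ omega0_pos)).mpr hβδ
end

section
/- If Ω₂·α + β < Ω₂·γ + δ where α, γ < ε₀, β, δ < Ω₂, and β = ξ·β' with β' < Ω₁·ω^γ + ω^(ω^γ)·δ and ξ < ω^(ω^γ), then Ω₁·ω^α + ω^(ω^α)·β < Ω₁·ω^γ + ω^(ω^γ)·δ. -/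
open Ordinal Cardinal

/-- The second uncountable ordinal. -/
noncomputable def Omega2 : Ordinal := (aleph 2).ord

lemma omega1_pos : 0 < Omega1 := by
  rw [Omega1, Cardinal.lt_ord]
  simpa using aleph_pos 1

lemma omega2_pos : 0 < Omega2 := by
  rw [Omega2, Cardinal.lt_ord]
  simpa using aleph_pos 2

lemma countable_mul_lt_omega1 {a b : Ordinal} (ha : a < Omega1) (hb : b < Omega1) :
    a * b < Omega1 := by
  rw [Omega1, Cardinal.lt_ord] at *
  rw [Ordinal.card_mul]
  calc a.card * b.card ≤ ℵ₀ * ℵ₀ := by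
        refine mul_le_mul' ?_ ?_ <;>
        · rwa [← Order.lt_succ_iff, succ_aleph0]
    _ = ℵ₀ := Cardinal.aleph0_mul_aleph0
    _ < aleph 1 := aleph0_lt_aleph_one

lemma mul_omega1_eq {a : Ordinal} (h0 : 0 < a) (h : a < Omega1) : a * Omega1 = Omega1 := by
  apply le_antisymm
  · refine (mul_le_iff_of_isSuccLimit (Cardinal.isSuccLimit_ord (aleph0_le_aleph 1))).2 fun b hb => ?_
    exact (countable_mul_lt_omega1 h hb).le
  · conv_lhs => rw [← one_mul Omega1]
    exact mul_le_mul_left (Order.one_le_iff_pos.2 h0) _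

universe u

lemma opow_lt_omega1 {b : Ordinal.{u}} (h : b < Omega1) : omega0 ^ b < Omega1 := by
  induction b using Ordinal.limitRecOn with
  | zero =>
      rw [opow_zero, Omega1, Cardinal.lt_ord]
      simpa using one_lt_aleph0.trans aleph0_lt_aleph_one
  | add_one b ih =>
      rw [opow_add_one]
      have hb : b < Omega1 := (lt_add_one b).trans h
      have hω : omega0 < Omega1 := by
        rw [Omega1, Cardinal.omega0_lt_ord]
        exact aleph0_lt_aleph_one
      exact countable_mul_lt_omega1 (ih hb) hω
  | limit b hl ih =>
      have hbs : ∀ x < b, x < Omega1 := fun x hx => hx.trans h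
      rw [← IsNormal.bsup_eq.{u, u} (isNormal_opow one_lt_omega0) hl]
      refine Ordinal.bsup_lt_ord ?_ ?_
      · rw [Omega1, isRegular_aleph_one.cof_eq]
        exact Cardinal.lt_ord.1 h
      · exact fun x hx => ih x hx (hbs x hx)

lemma eps0_lt_omega1 : eps0 < Omega1 := by
  rw [eps0, Omega1]
  refine Cardinal.nfp_lt_ord_of_isRegular isRegular_aleph_one ?_ ?_ ?_
  · exact (aleph0_lt_aleph_one).ne'
  · intro i hi
    exact opow_lt_omega1 hi
  · rw [Cardinal.lt_ord]
    simpa using aleph_pos 1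

lemma opow_lt_eps0 {b : Ordinal} (h : b < eps0) : omega0 ^ b < eps0 := by
  have hfp : omega0 ^ eps0 = eps0 :=
    Ordinal.nfp_fp (isNormal_opow one_lt_omega0) 0
  calc omega0 ^ b < omega0 ^ eps0 := (opow_lt_opow_iff_right one_lt_omega0).2 h
    _ = eps0 := hfp

/-- If `Ω₂·α + β < Ω₂·γ + δ` with `α, γ < ε₀`, `β, δ < Ω₂`, and `β = ξ·β'` with
`β' < Ω₁·ω^γ + ω^(ω^γ)·δ` and `ξ < ω^(ω^γ)`, then
`Ω₁·ω^α + ω^(ω^α)·β < Ω₁·ω^γ + ω^(ω^γ)·δ`. -/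
theorem stmt11 (α β γ δ ξ β' : Ordinal) (hα : α < eps0) (hγ : γ < eps0)
    (hβ : β < Omega2) (hδ : δ < Omega2)
    (h : Omega2 * α + β < Omega2 * γ + δ)
    (hfact : β = ξ * β')
    (hβ' : β' < Omega1 * omega0 ^ γ + omega0 ^ (omega0 ^ γ) * δ)
    (hξ : ξ < omega0 ^ (omega0 ^ γ)) :
    Omega1 * omega0 ^ α + omega0 ^ (omega0 ^ α) * β <
      Omega1 * omega0 ^ γ + omega0 ^ (omega0 ^ γ) * δ := by
  -- First: α ≤ γ
  have hαγ : α ≤ γ := by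
    have h1 : Omega2 * α < Omega2 * (γ + 1) := by
      calc Omega2 * α ≤ Omega2 * α + β := le_self_add
        _ < Omega2 * γ + δ := h
        _ < Omega2 * γ + Omega2 := add_lt_add_right hδ _
        _ = Omega2 * (γ + 1) := by rw [mul_add, mul_one]
    have := (mul_lt_mul_iff_right₀ omega2_pos).1 h1
    exact Order.lt_succ_iff.1 (by rwa [add_one_eq_succ] at this)
  rcases hαγ.lt_or_eq with hlt | rfl
  · -- case α < γ
    have hωαγ : omega0 ^ α < omega0 ^ γ := (opow_lt_opow_iff_right one_lt_omega0).2 hlt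
    have hee : omega0 ^ (omega0 ^ α) < omega0 ^ (omega0 ^ γ) :=
      (opow_lt_opow_iff_right one_lt_omega0).2 hωαγ
    have habs : Omega1 * omega0 ^ α + (Omega1 * omega0 ^ γ + omega0 ^ (omega0 ^ γ) * δ)
        = Omega1 * omega0 ^ γ + omega0 ^ (omega0 ^ γ) * δ := by
      rw [← add_assoc, ← mul_add, add_omega0_opow hωαγ]
    rcases eq_or_lt_of_le (zero_le : 0 ≤ ξ) with hξ0 | hξ0
    · -- ξ = 0, hence β = 0
      have hβ0 : β = 0 := by rw [hfact, ← hξ0, zero_mul]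
      rw [hβ0, mul_zero, add_zero]
      calc Omega1 * omega0 ^ α < Omega1 * omega0 ^ γ :=
            mul_lt_mul_of_pos_left hωαγ omega1_pos
        _ ≤ Omega1 * omega0 ^ γ + omega0 ^ (omega0 ^ γ) * δ := le_self_add
    · -- ξ > 0
      set η := omega0 ^ (omega0 ^ α) * ξ with hη_def
      have hηpos : 0 < η := mul_pos (opow_pos _ omega0_pos) hξ0
      have hηlt : η < omega0 ^ (omega0 ^ γ) :=
        principal_mul_omega0_opow_opow γ hee hξ
      have hηe : η * omega0 ^ (omega0 ^ γ) = omega0 ^ (omega0 ^ γ) :=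
        mul_omega0_opow_opow hηpos hηlt
      -- T = e * S
      have heΩ : omega0 ^ (omega0 ^ γ) * Omega1 = Omega1 := by
        apply mul_omega1_eq (opow_pos _ omega0_pos)
        exact (opow_lt_eps0 (opow_lt_eps0 hγ)).trans eps0_lt_omega1
      have hT : omega0 ^ (omega0 ^ γ) * (Omega1 * omega0 ^ γ + δ)
          = Omega1 * omega0 ^ γ + omega0 ^ (omega0 ^ γ) * δ := by
        rw [mul_add, ← mul_assoc, heΩ]
      have h1 : omega0 ^ (omega0 ^ α) * β
          < Omega1 * omega0 ^ γ + omega0 ^ (omega0 ^ γ) * δ := by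
        rw [hfact, ← mul_assoc, ← hη_def]
        calc η * β' < η * (Omega1 * omega0 ^ γ + omega0 ^ (omega0 ^ γ) * δ) :=
              mul_lt_mul_of_pos_left hβ' hηpos
          _ = η * (omega0 ^ (omega0 ^ γ) * (Omega1 * omega0 ^ γ + δ)) := by rw [hT]
          _ = (η * omega0 ^ (omega0 ^ γ)) * (Omega1 * omega0 ^ γ + δ) :=
                (mul_assoc _ _ _).symm
          _ = omega0 ^ (omega0 ^ γ) * (Omega1 * omega0 ^ γ + δ) := by rw [hηe]
          _ = Omega1 * omega0 ^ γ + omega0 ^ (omega0 ^ γ) * δ := hT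
      calc Omega1 * omega0 ^ α + omega0 ^ (omega0 ^ α) * β
          < Omega1 * omega0 ^ α + (Omega1 * omega0 ^ γ + omega0 ^ (omega0 ^ γ) * δ) :=
            add_lt_add_right h1 _
        _ = Omega1 * omega0 ^ γ + omega0 ^ (omega0 ^ γ) * δ := habs
  · -- case α = γ
    have hβδ : β < δ := by
      have := h
      rwa [add_lt_add_iff_left] at this
    exact add_lt_add_right (mul_lt_mul_of_pos_left hβδ (opow_pos _ omega0_pos)) _
end

section
/- For ordinals below ε₀, the function f defined by f(0) = 0 and f(ω^α₁ + α₂) = ω^α₁ + f(α₁) + f(α₂) satisfies f(β) ≤ β·ω for every β. -/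
open Ordinal

/-- Terms for ordinals below `ε₀`, built from `0` by `α ↦ ω^α` and `+`. -/
inductive ETerm : Type
  | zero : ETerm
  | omega : ETerm → ETerm
  | add : ETerm → ETerm → ETerm

/-- The ordinal value of a term. -/
noncomputable def ETerm.val : ETerm → Ordinal
  | ETerm.zero => 0
  | ETerm.omega a => omega0 ^ ETerm.val a
  | ETerm.add a b => ETerm.val a + ETerm.val b

/-- `f(0) = 0`, `f(ω^α₁ + α₂) = ω^α₁ + f(α₁) + f(α₂)`. -/
noncomputable def ETerm.f : ETerm → Ordinal
  | ETerm.zero => 0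
  | ETerm.omega a => omega0 ^ ETerm.val a + ETerm.f a
  | ETerm.add a b => ETerm.f a + ETerm.f b

universe u

/-- If `val b = 0` then `f b = 0`. -/
lemma ETerm.f_of_val_eq_zero : ∀ b : ETerm, ETerm.val.{u} b = 0 → ETerm.f.{u} b = 0
  | ETerm.zero, _ => rfl
  | ETerm.omega a, h => absurd h (opow_pos (ETerm.val.{u} a) omega0_pos).ne'
  | ETerm.add a b, h => by
      rw [ETerm.val, Ordinal.add_eq_zero_iff] at h
      rw [ETerm.f, ETerm.f_of_val_eq_zero a h.1, ETerm.f_of_val_eq_zero b h.2, add_zero]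

/-- `x * ω` is closed under addition. -/
lemma mul_omega0_add_lt {x y z : Ordinal.{u}} (hx : 0 < x)
    (hy : y < x * omega0) (hz : z < x * omega0) : y + z < x * omega0 := by
  obtain ⟨m, hm, hym⟩ := (lt_mul_iff_of_isSuccLimit isSuccLimit_omega0).1 hy
  obtain ⟨n, hn, hzn⟩ := (lt_mul_iff_of_isSuccLimit isSuccLimit_omega0).1 hz
  calc y + z < y + x * n := (add_lt_add_iff_left y).2 hzn
    _ ≤ x * m + x * n := add_le_add_left hym.le _
    _ = x * (m + n) := (mul_add x m n).symm
    _ < x * omega0 := (mul_lt_mul_iff_right₀ hx).2 (principal_add_omega0 hm hn)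

lemma ETerm.f_lt : ∀ b : ETerm, ETerm.val.{u} b ≠ 0 → ETerm.f.{u} b < ETerm.val.{u} b * omega0 := by
  intro b
  induction b with
  | zero => exact fun hb => absurd rfl hb
  | omega a ih =>
      intro _
      rw [ETerm.f, ETerm.val]
      rcases eq_or_ne (ETerm.val.{u} a) 0 with h | h
      · rw [ETerm.f_of_val_eq_zero a h, add_zero, h, opow_zero]
        simpa using one_lt_omega0
      · have h1 : ETerm.f.{u} a < omega0 ^ ETerm.val.{u} a * omega0 :=
          (ih h).trans_le
            (mul_le_mul_left (right_le_opow (ETerm.val.{u} a) one_lt_omega0) omega0)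
        calc omega0 ^ ETerm.val.{u} a + ETerm.f.{u} a
            < omega0 ^ ETerm.val.{u} a + omega0 ^ ETerm.val.{u} a * omega0 :=
              (add_lt_add_iff_left _).2 h1
          _ = omega0 ^ ETerm.val.{u} a * (1 + omega0) := by rw [mul_add, mul_one]
          _ = omega0 ^ ETerm.val.{u} a * omega0 := by rw [one_add_omega0]
  | add a c iha ihc =>
      intro hb
      rw [ETerm.f, ETerm.val]
      rw [show ETerm.val.{u} (ETerm.add a c) = ETerm.val.{u} a + ETerm.val.{u} c from rfl] at hb
      rcases eq_or_ne (ETerm.val.{u} a) 0 with ha | ha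
      · rw [ETerm.f_of_val_eq_zero a ha, zero_add, ha, zero_add]
        exact ihc (by simpa [ha] using hb)
      rcases eq_or_ne (ETerm.val.{u} c) 0 with hc | hc
      · rw [ETerm.f_of_val_eq_zero c hc, add_zero, hc, add_zero]
        exact iha ha
      have hpos : (0 : Ordinal.{u}) < ETerm.val.{u} a + ETerm.val.{u} c :=
        pos_iff_ne_zero.2 (by simp [Ordinal.add_eq_zero_iff, ha])
      refine mul_omega0_add_lt hpos ?_ ?_
      · exact (iha ha).trans_le (mul_le_mul_left le_self_add _)
      · exact (ihc hc).trans_le (mul_le_mul_left le_add_self _)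

/-- `f(β) ≤ β·ω` for every `β` below `ε₀`. -/
theorem stmt13 (b : ETerm) : ETerm.f b ≤ ETerm.val b * omega0 := by
  rcases eq_or_ne (ETerm.val b) 0 with h | h
  · rw [ETerm.f_of_val_eq_zero b h, h, zero_mul]
  · exact (ETerm.f_lt b h).le
end
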